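/- Let (Ω, 𝓕, μₚ) be a probability space, W : Ω → ℝ a nonnegative bounded measurable function with ∫ W dμₚ = 1, R : Ω → ℝ measurable and bounded, and c > 0. Let g₁, …, g_m be pairwise disjoint measurable subsets of Ω covering Ω, each satisfying ∫_{g_j} min(W, c) dμₚ > 0. Let Z : ℕ → Ω' → Ω be an i.i.d. sequence on a probability space (Ω', μ') with common law μₚ. Then almost surely under μ', the piecewise-normalised capped importance sampling estimator converges: ∑_{j=1}^m ( #{i < n : Z_i ∈ g_j} / n ) · ( ∑_{i < n, Z_i ∈ g_j} min(W(Z_i), c)·R(Z_i) ) / ( ∑_{i < n, Z_i ∈ g_j} min(W(Z_i), c) ) → ∑_{j=1}^m μₚ(g_j) · ( ∫_{g_j} min(W, c)·R dμₚ ) / ( ∫_{g_j} min(W, c) dμₚ ) as n → ∞. -/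

import Mathlib

open MeasureTheory Filter

/-- SLLN for a bounded measurable function composed with an i.i.d. sequence. -/
lemma slln_comp
    {Ω Ω' : Type*} [MeasurableSpace Ω] [MeasurableSpace Ω']
    (μₚ : Measure Ω) [IsProbabilityMeasure μₚ]
    (μ' : Measure Ω') [IsProbabilityMeasure μ']
    (Z : ℕ → Ω' → Ω) (hZ_meas : ∀ i, Measurable (Z i))
    (hZ_indep : ProbabilityTheory.iIndepFun Z μ')
    (hZ_law : ∀ i, Measure.map (Z i) μ' = μₚ)
    (f : Ω → ℝ) (hf : Measurable f) (C : ℝ) (hC : ∀ ω, |f ω| ≤ C) :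
    ∀ᵐ ω' ∂μ', Tendsto (fun n : ℕ => (∑ i ∈ Finset.range n, f (Z i ω')) / n)
      atTop (nhds (∫ ω, f ω ∂μₚ)) := by
  have hint : Integrable (fun ω' => f (Z 0 ω')) μ' :=
    ⟨(hf.comp (hZ_meas 0)).aestronglyMeasurable,
      HasFiniteIntegral.of_bounded (C := C)
        (ae_of_all _ fun ω' => by simpa [Real.norm_eq_abs] using hC (Z 0 ω'))⟩
  have hindep : Pairwise (Function.onFun (ProbabilityTheory.IndepFun · · μ') (fun i ω' => f (Z i ω'))) :=
    fun i j hij => (hZ_indep.indepFun hij).comp hf hf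
  have hident : ∀ i, ProbabilityTheory.IdentDistrib (fun ω' => f (Z i ω'))
      (fun ω' => f (Z 0 ω')) μ' μ' := fun i =>
    ⟨(hf.comp (hZ_meas i)).aemeasurable, (hf.comp (hZ_meas 0)).aemeasurable, by
      show Measure.map (f ∘ Z i) μ' = Measure.map (f ∘ Z 0) μ'
      rw [← Measure.map_map hf (hZ_meas i), ← Measure.map_map hf (hZ_meas 0),
        hZ_law, hZ_law]⟩
  have h := ProbabilityTheory.strong_law_ae_real _ hint hindep hident
  have hi : ∫ ω', f (Z 0 ω') ∂μ' = ∫ ω, f ω ∂μₚ := by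
    rw [← hZ_law 0, integral_map (hZ_meas 0).aemeasurable hf.aestronglyMeasurable]
  rwa [hi] at h

/-- Almost-sure convergence of the PieceNCIS estimator: stratifying over a finite
measurable partition `g 1, …, g m` of the context space, the estimator combining the
per-group NCIS ratios weighted by the empirical group frequencies converges almost
surely to `∑ j, μₚ(g j) · (∫_{g j} min(W,c)·R dμₚ) / (∫_{g j} min(W,c) dμₚ)`. -/
theorem piecencis_asymptotic
    {Ω Ω' : Type*} [MeasurableSpace Ω] [MeasurableSpace Ω']
    (μₚ : Measure Ω) [IsProbabilityMeasure μₚ]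
    (W : Ω → ℝ) (hW_meas : Measurable W) (hW_nonneg : ∀ ω, 0 ≤ W ω)
    (hW_int : ∫ ω, W ω ∂μₚ = 1) (CW : ℝ) (hW_bdd : ∀ ω, W ω ≤ CW)
    (R : Ω → ℝ) (hR_meas : Measurable R) (CR : ℝ) (hR_bdd : ∀ ω, |R ω| ≤ CR)
    (c : ℝ) (hc : 0 < c)
    (m : ℕ) (g : Fin m → Set Ω) (hg_meas : ∀ j, MeasurableSet (g j))
    (hg_disj : Pairwise (Function.onFun Disjoint g))
    (hg_cover : (⋃ j, g j) = Set.univ)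
    (hg_pos : ∀ j, 0 < ∫ ω in g j, min (W ω) c ∂μₚ)
    (μ' : Measure Ω') [IsProbabilityMeasure μ']
    (Z : ℕ → Ω' → Ω) (hZ_meas : ∀ i, Measurable (Z i))
    (hZ_indep : ProbabilityTheory.iIndepFun Z μ')
    (hZ_law : ∀ i, Measure.map (Z i) μ' = μₚ) :
    ∀ᵐ ω' ∂μ', Tendsto
      (fun n : ℕ => ∑ j : Fin m,
        ((∑ i ∈ Finset.range n, Set.indicator (g j) (fun _ => (1 : ℝ)) (Z i ω')) / n) *
        ((∑ i ∈ Finset.range n,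
            Set.indicator (g j) (fun z => min (W z) c * R z) (Z i ω')) /
         (∑ i ∈ Finset.range n,
            Set.indicator (g j) (fun z => min (W z) c) (Z i ω'))))
      atTop
      (nhds (∑ j : Fin m, (μₚ (g j)).toReal *
        ((∫ ω in g j, min (W ω) c * R ω ∂μₚ) / (∫ ω in g j, min (W ω) c ∂μₚ)))) := by
  classical
  -- bounds on the three composed functions
  have hmin_nonneg : ∀ ω, 0 ≤ min (W ω) c := fun ω => le_min (hW_nonneg ω) hc.le
  have hmin_le : ∀ ω, min (W ω) c ≤ c := fun ω => min_le_right _ _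
  -- three SLLN statements per group
  have h1 : ∀ j : Fin m, ∀ᵐ ω' ∂μ', Tendsto
      (fun n : ℕ => (∑ i ∈ Finset.range n,
        Set.indicator (g j) (fun _ => (1:ℝ)) (Z i ω')) / n) atTop
      (nhds ((μₚ (g j)).toReal) ) := by
    intro j
    have := slln_comp μₚ μ' Z hZ_meas hZ_indep hZ_law
      (Set.indicator (g j) (fun _ => (1:ℝ)))
      (measurable_const.indicator (hg_meas j)) 1
      (fun ω => by
        by_cases h : ω ∈ g j <;> simp [Set.indicator_apply, h])
    rwa [show (∫ ω, Set.indicator (g j) (fun _ => (1:ℝ)) ω ∂μₚ) = (μₚ (g j)).toReal from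
      MeasureTheory.integral_indicator_one (hg_meas j)] at this
  have h2 : ∀ j : Fin m, ∀ᵐ ω' ∂μ', Tendsto
      (fun n : ℕ => (∑ i ∈ Finset.range n,
        Set.indicator (g j) (fun z => min (W z) c) (Z i ω')) / n) atTop
      (nhds (∫ ω in g j, min (W ω) c ∂μₚ)) := by
    intro j
    have := slln_comp μₚ μ' Z hZ_meas hZ_indep hZ_law
      (Set.indicator (g j) (fun z => min (W z) c))
      ((hW_meas.min measurable_const).indicator (hg_meas j)) c
      (fun ω => by
        by_cases h : ω ∈ g j
        · simp only [Set.indicator_apply, h, if_true]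
          rw [abs_of_nonneg (hmin_nonneg ω)]; exact hmin_le ω
        · simp [Set.indicator_apply, h, hc.le])
    rwa [MeasureTheory.integral_indicator (hg_meas j)] at this
  have h3 : ∀ j : Fin m, ∀ᵐ ω' ∂μ', Tendsto
      (fun n : ℕ => (∑ i ∈ Finset.range n,
        Set.indicator (g j) (fun z => min (W z) c * R z) (Z i ω')) / n) atTop
      (nhds (∫ ω in g j, min (W ω) c * R ω ∂μₚ)) := by
    intro j
    have := slln_comp μₚ μ' Z hZ_meas hZ_indep hZ_law
      (Set.indicator (g j) (fun z => min (W z) c * R z))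
      (((hW_meas.min measurable_const).mul hR_meas).indicator (hg_meas j)) (c * |CR|)
      (fun ω => by
        by_cases h : ω ∈ g j
        · simp only [Set.indicator_apply, h, if_true]
          rw [abs_mul, abs_of_nonneg (hmin_nonneg ω)]
          exact mul_le_mul (hmin_le ω) ((hR_bdd ω).trans (le_abs_self CR))
            (abs_nonneg _) hc.le
        · simp only [Set.indicator_apply, h, if_false, abs_zero]
          positivity)
    rwa [MeasureTheory.integral_indicator (hg_meas j)] at this
  filter_upwards [MeasureTheory.ae_all_iff.2 h1, MeasureTheory.ae_all_iff.2 h2,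
    MeasureTheory.ae_all_iff.2 h3] with ω' H1 H2 H3
  apply tendsto_finset_sum
  intro j _
  have hI2 : (∫ ω in g j, min (W ω) c ∂μₚ) ≠ 0 := (hg_pos j).ne'
  have hq : Tendsto (fun n : ℕ =>
      ((∑ i ∈ Finset.range n, Set.indicator (g j) (fun _ => (1:ℝ)) (Z i ω')) / n) *
      (((∑ i ∈ Finset.range n,
          Set.indicator (g j) (fun z => min (W z) c * R z) (Z i ω')) / n) /
       ((∑ i ∈ Finset.range n,
          Set.indicator (g j) (fun z => min (W z) c) (Z i ω')) / n)))
      atTop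
      (nhds ((μₚ (g j)).toReal *
        ((∫ ω in g j, min (W ω) c * R ω ∂μₚ) / (∫ ω in g j, min (W ω) c ∂μₚ)))) :=
    (H1 j).mul ((H3 j).div (H2 j) hI2)
  refine hq.congr' ?_
  filter_upwards [eventually_ne_atTop 0] with n hn
  have hn' : (n : ℝ) ≠ 0 := Nat.cast_ne_zero.2 hn
  congr 1
  rw [div_div_div_cancel_right₀ hn']
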